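/- Let (M, d) be a length space, Θ ⊆ M permeable, and (Y, d_Y) a metric space. If f : M → Y is continuous and its restriction to M \ Θ is L-Lipschitz with respect to the intrinsic metric on M \ Θ, then f is L-Lipschitz continuous on all of M with respect to d. -/

import Mathlib

open Set MeasureTheory ENNReal

section Defs

variable {M : Type*} [MetricSpace M]

/-- `γ` is a path in `E` from `x` to `y` parametrized on `[a,b]`. -/
def IsPathIn (E : Set M) (γ : ℝ → M) (a b : ℝ) (x y : M) : Prop :=
  a ≤ b ∧ ContinuousOn γ (Set.Icc a b) ∧ γ a = x ∧ γ b = y ∧ ∀ t ∈ Set.Icc a b, γ t ∈ E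

/-- Length of a path: total variation over `[a,b]`. -/
noncomputable def pathLength (γ : ℝ → M) (a b : ℝ) : ℝ≥0∞ := eVariationOn γ (Set.Icc a b)

/-- Intrinsic metric on `E`: infimum of lengths of finite-length paths in `E`. -/
noncomputable def intrinsicDist (E : Set M) (x y : M) : ℝ≥0∞ :=
  sInf { L | ∃ γ a b, IsPathIn E γ a b x y ∧ pathLength γ a b < ⊤ ∧ pathLength γ a b = L }

/-- `Θ`-intrinsic metric relative to ambient set `N`: only paths whose intersection with `Θ`
has countable closure (closure taken in the subspace `N`) are allowed. -/
noncomputable def thetaDistIn (N Θ : Set M) (x y : M) : ℝ≥0∞ :=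
  sInf { L | ∃ γ a b, IsPathIn N γ a b x y ∧ pathLength γ a b < ⊤ ∧
    (closure (γ '' Set.Icc a b ∩ Θ) ∩ N).Countable ∧ pathLength γ a b = L }

/-- `Θ`-finite intrinsic metric relative to ambient set `N`: only paths meeting `Θ` in finitely
many points are allowed. -/
noncomputable def thetaFinDistIn (N Θ : Set M) (x y : M) : ℝ≥0∞ :=
  sInf { L | ∃ γ a b, IsPathIn N γ a b x y ∧ pathLength γ a b < ⊤ ∧
    (γ '' Set.Icc a b ∩ Θ).Finite ∧ pathLength γ a b = L }

/-- `Θ` is permeable relative to `N`. -/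
def PermeableIn (N Θ : Set M) : Prop :=
  ∀ x ∈ N, ∀ y ∈ N, thetaDistIn N Θ x y = intrinsicDist N x y

/-- `Θ` is finitely permeable relative to `N`. -/
def FinitelyPermeableIn (N Θ : Set M) : Prop :=
  ∀ x ∈ N, ∀ y ∈ N, thetaFinDistIn N Θ x y = intrinsicDist N x y

/-- `Θ` is permeable (relative to the whole space). -/
def Permeable (Θ : Set M) : Prop := PermeableIn Set.univ Θ

/-- `Θ` is finitely permeable (relative to the whole space). -/
def FinitelyPermeable (Θ : Set M) : Prop := FinitelyPermeableIn Set.univ Θ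

end Defs

lemma key_estimate {M Y : Type*} [MetricSpace M] [MetricSpace Y]
    (Θ : Set M) (f : M → Y) (hf : Continuous f) (L : NNReal)
    (hLip : ∀ x ∈ Θᶜ, ∀ y ∈ Θᶜ, intrinsicDist Θᶜ x y < ⊤ →
      edist (f x) (f y) ≤ L * intrinsicDist Θᶜ x y)
    (γ : ℝ → M) (a b : ℝ) (x y : M)
    (hpath : IsPathIn Set.univ γ a b x y) (hfin : pathLength γ a b < ⊤)
    (hcnt : (closure (γ '' Set.Icc a b ∩ Θ)).Countable) :
    edist (f x) (f y) ≤ L * pathLength γ a b := by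
  obtain ⟨hab, hγc, hγa, hγb, -⟩ := hpath
  have hfin' : eVariationOn γ (Set.Icc a b) < ⊤ := hfin
  -- the variation function
  set V : ℝ → ℝ := fun t => (eVariationOn γ (Set.Icc a t)).toReal with hV
  have hvar_ne : ∀ {s t : ℝ}, a ≤ s → t ≤ b → eVariationOn γ (Set.Icc s t) ≠ ⊤ := by
    intro s t hs ht
    exact (lt_of_le_of_lt (eVariationOn.mono γ (Icc_subset_Icc hs ht)) hfin').ne
  have hVmono : ∀ {s t : ℝ}, a ≤ s → s ≤ t → t ≤ b → V s ≤ V t := by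
    intro s t hs hst ht
    exact ENNReal.toReal_mono (hvar_ne le_rfl ht)
      (eVariationOn.mono γ (Icc_subset_Icc le_rfl hst))
  have hVdiff : ∀ {s t : ℝ}, a ≤ s → s ≤ t → t ≤ b →
      (eVariationOn γ (Set.Icc s t)).toReal = V t - V s := by
    intro s t hs hst ht
    have h := eVariationOn.Icc_add_Icc γ (s := Set.univ) hs hst (Set.mem_univ s)
    simp only [Set.univ_inter] at h
    have h1 : eVariationOn γ (Set.Icc a s) ≠ ⊤ := hvar_ne le_rfl (hst.trans ht)
    have h2 : eVariationOn γ (Set.Icc s t) ≠ ⊤ := hvar_ne hs ht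
    have := congrArg ENNReal.toReal h
    rw [ENNReal.toReal_add h1 h2] at this
    simp only [hV]
    linarith
  -- core estimate on intervals avoiding Θ, interior version
  have subcore : ∀ u v s t : ℝ, a ≤ u → v ≤ b → (∀ r ∈ Set.Ioo u v, γ r ∉ Θ) →
      u < s → s ≤ t → t < v → dist (f (γ s)) (f (γ t)) ≤ (L : ℝ) * (V t - V s) := by
    intro u v s t hau hvb hno hus hst htv
    have hsa : a ≤ s := hau.trans hus.le
    have htb : t ≤ b := htv.le.trans hvb
    have hpath2 : IsPathIn Θᶜ γ s t (γ s) (γ t) := by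
      refine ⟨hst, hγc.mono (Icc_subset_Icc hsa htb), rfl, rfl, fun r hr => ?_⟩
      exact hno r ⟨hus.trans_le hr.1, hr.2.trans_lt htv⟩
    have hlen2 : pathLength γ s t ≤ pathLength γ a b := eVariationOn.mono γ (Icc_subset_Icc hsa htb)
    have hlt2 : pathLength γ s t < ⊤ := lt_of_le_of_lt hlen2 hfin
    have hid : intrinsicDist Θᶜ (γ s) (γ t) ≤ pathLength γ s t :=
      sInf_le ⟨γ, s, t, hpath2, hlt2, rfl⟩
    have hmem_s : γ s ∈ Θᶜ := hno s ⟨hus, hst.trans_lt htv⟩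
    have hmem_t : γ t ∈ Θᶜ := hno t ⟨hus.trans_le hst, htv⟩
    have he : edist (f (γ s)) (f (γ t)) ≤ (L : ℝ≥0∞) * eVariationOn γ (Set.Icc s t) := by
      calc edist (f (γ s)) (f (γ t)) ≤ L * intrinsicDist Θᶜ (γ s) (γ t) :=
            hLip (γ s) hmem_s (γ t) hmem_t (lt_of_le_of_lt hid hlt2)
        _ ≤ (L : ℝ≥0∞) * eVariationOn γ (Set.Icc s t) := mul_le_mul_right hid _
    have hRne : (L : ℝ≥0∞) * eVariationOn γ (Set.Icc s t) ≠ ⊤ :=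
      ENNReal.mul_ne_top ENNReal.coe_ne_top (hvar_ne hsa htb)
    have := ENNReal.toReal_mono hRne he
    rw [← dist_edist] at this
    rwa [ENNReal.toReal_mul, ENNReal.coe_toReal, hVdiff hsa hst htb] at this
  have hgcont : ContinuousOn (fun r => f (γ r)) (Set.Icc a b) := hf.comp_continuousOn hγc
  have core : ∀ u v : ℝ, a ≤ u → v ≤ b → u < v → (∀ r ∈ Set.Ioo u v, γ r ∉ Θ) →
      dist (f (γ u)) (f (γ v)) ≤ (L : ℝ) * (V v - V u) := by
    intro u v hau hvb huv hno
    apply _root_.le_of_forall_pos_le_add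
    intro ε hε
    have huIcc : u ∈ Set.Icc a b := ⟨hau, huv.le.trans hvb⟩
    have hvIcc : v ∈ Set.Icc a b := ⟨hau.trans huv.le, hvb⟩
    obtain ⟨δ₁, hδ₁, H₁⟩ := Metric.continuousWithinAt_iff.mp (hgcont u huIcc) (ε / 2) (by linarith)
    obtain ⟨δ₂, hδ₂, H₂⟩ := Metric.continuousWithinAt_iff.mp (hgcont v hvIcc) (ε / 2) (by linarith)
    set s := min (u + δ₁ / 2) ((u + v) / 2) with hs
    set t := max (v - δ₂ / 2) ((u + v) / 2) with ht
    have hus : u < s := lt_min (by linarith) (by linarith)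
    have hsv : s < v := (min_le_right _ _).trans_lt (by linarith)
    have htv : t < v := max_lt (by linarith) (by linarith)
    have hut : u < t := lt_of_lt_of_le (by linarith) (le_max_right _ _)
    have hst : s ≤ t := (min_le_right _ _).trans (le_max_right _ _)
    have hsIcc : s ∈ Set.Icc a b := ⟨hau.trans hus.le, hsv.le.trans hvb⟩
    have htIcc : t ∈ Set.Icc a b := ⟨hau.trans hut.le, htv.le.trans hvb⟩
    have hds : dist s u < δ₁ := by
      rw [Real.dist_eq, abs_of_pos (by linarith)]
      have : s ≤ u + δ₁ / 2 := min_le_left _ _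
      linarith
    have hdt : dist t v < δ₂ := by
      rw [Real.dist_eq, abs_of_nonpos (by linarith)]
      have : v - δ₂ / 2 ≤ t := le_max_left _ _
      linarith
    have h1 : dist (f (γ s)) (f (γ u)) < ε / 2 := H₁ hsIcc hds
    have h2 : dist (f (γ t)) (f (γ v)) < ε / 2 := H₂ htIcc hdt
    have h3 : dist (f (γ s)) (f (γ t)) ≤ (L : ℝ) * (V t - V s) :=
      subcore u v s t hau hvb hno hus hst htv
    have h4 : (L : ℝ) * (V t - V s) ≤ (L : ℝ) * (V v - V u) := by
      apply mul_le_mul_of_nonneg_left _ L.coe_nonneg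
      have e1 : V u ≤ V s := hVmono hau hus.le (hsv.le.trans hvb)
      have e2 : V t ≤ V v := hVmono (hau.trans hut.le) htv.le hvb
      linarith
    calc dist (f (γ u)) (f (γ v)) ≤
        dist (f (γ u)) (f (γ s)) + dist (f (γ s)) (f (γ t)) + dist (f (γ t)) (f (γ v)) :=
          dist_triangle4 _ _ _ _
      _ ≤ (L : ℝ) * (V v - V u) + ε := by
          rw [dist_comm (f (γ u))]
          linarith
  -- main measure argument
  rw [edist_dist]
  set B := dist (f x) (f y) with hB
  rcases eq_or_lt_of_le (dist_nonneg : (0:ℝ) ≤ B) with hB0 | hB0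
  · rw [hB, ← hB0, ENNReal.ofReal_zero]; exact zero_le
  set C := closure (γ '' Set.Icc a b ∩ Θ) with hC
  set K := Set.Icc a b ∩ γ ⁻¹' C with hK
  set m : ℝ → ℝ := fun t => dist (f x) (f (γ t)) with hm
  have hmc : ContinuousOn m (Set.Icc a b) :=
    (continuous_const.dist continuous_id).comp_continuousOn hgcont
  have hma : m a = 0 := by simp [hm, hγa]
  have hmb : m b = B := by simp [hm, hγb, hB]
  have hKcl : IsClosed K := hγc.preimage_isClosed_of_isClosed isClosed_Icc isClosed_closure
  have hKcomp : IsCompact K := isCompact_Icc.of_isClosed_subset hKcl Set.inter_subset_left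
  set F : Set ℝ := m '' K ∪ {0, B} with hF
  have hFcl : IsClosed F :=
    ((hKcomp.image_of_continuousOn (hmc.mono Set.inter_subset_left)).isClosed).union
      (Set.toFinite ({0, B} : Set ℝ)).isClosed
  have hFcnt : F.Countable := by
    apply Set.Countable.union _ (Set.toFinite ({0, B} : Set ℝ)).countable
    have hsub : m '' K ⊆ (fun z => dist (f x) (f z)) '' C := by
      rintro w ⟨t, ht, rfl⟩
      exact ⟨γ t, ht.2, rfl⟩
    exact Set.Countable.mono hsub (hcnt.image _)
  have h0F : (0:ℝ) ∈ F := Or.inr (Or.inl rfl)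
  have hBF : B ∈ F := Or.inr (Or.inr rfl)
  set G : Set (ℝ × ℝ) := {g | g.1 ∈ F ∧ g.2 ∈ F ∧ 0 ≤ g.1 ∧ g.1 < g.2 ∧ g.2 ≤ B ∧
    Set.Ioo g.1 g.2 ∩ F = ∅} with hG
  have hGcnt : G.Countable :=
    Set.Countable.mono (fun g hg => Set.mem_prod.mpr ⟨hg.1, hg.2.1⟩) (hFcnt.prod hFcnt)
  set u : ℝ × ℝ → ℝ := fun g => sSup (Set.Icc a b ∩ m ⁻¹' Set.Iic g.1) with hudef
  set v : ℝ × ℝ → ℝ := fun g => sInf (Set.Icc (u g) b ∩ m ⁻¹' Set.Ici g.2) with hvdef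
  have hu : ∀ g : ℝ × ℝ, g ∈ G →
      u g ∈ Set.Icc a b ∧ m (u g) ≤ g.1 ∧ ∀ t ∈ Set.Icc a b, m t ≤ g.1 → t ≤ u g := by
    intro g hg
    have hUcl : IsClosed (Set.Icc a b ∩ m ⁻¹' Set.Iic g.1) :=
      hmc.preimage_isClosed_of_isClosed isClosed_Icc isClosed_Iic
    have hUne : (Set.Icc a b ∩ m ⁻¹' Set.Iic g.1).Nonempty :=
      ⟨a, ⟨le_rfl, hab⟩, by simp only [Set.mem_preimage, Set.mem_Iic, hma]; exact hg.2.2.1⟩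
    have hUbdd : BddAbove (Set.Icc a b ∩ m ⁻¹' Set.Iic g.1) := ⟨b, fun t ht => ht.1.2⟩
    have hmem := hUcl.csSup_mem hUne hUbdd
    exact ⟨hmem.1, hmem.2, fun t ht hmt => le_csSup hUbdd ⟨ht, hmt⟩⟩
  have hv : ∀ g : ℝ × ℝ, g ∈ G →
      v g ∈ Set.Icc (u g) b ∧ g.2 ≤ m (v g) ∧ ∀ t ∈ Set.Icc (u g) b, g.2 ≤ m t → v g ≤ t := by
    intro g hg
    obtain ⟨huIcc, -, -⟩ := hu g hg
    have hQcl : IsClosed (Set.Icc (u g) b ∩ m ⁻¹' Set.Ici g.2) :=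
      (hmc.mono (Icc_subset_Icc huIcc.1 le_rfl)).preimage_isClosed_of_isClosed
        isClosed_Icc isClosed_Ici
    have hQne : (Set.Icc (u g) b ∩ m ⁻¹' Set.Ici g.2).Nonempty :=
      ⟨b, ⟨huIcc.2, le_rfl⟩, by simp only [Set.mem_preimage, Set.mem_Ici, hmb]; exact hg.2.2.2.2.1⟩
    have hQbdd : BddBelow (Set.Icc (u g) b ∩ m ⁻¹' Set.Ici g.2) := ⟨u g, fun t ht => ht.1.1⟩
    have hmem := hQcl.csInf_mem hQne hQbdd
    exact ⟨hmem.1, hmem.2, fun t ht hmt => csInf_le hQbdd ⟨ht, hmt⟩⟩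
  have huv : ∀ g : ℝ × ℝ, g ∈ G → u g < v g := by
    intro g hg
    rcases eq_or_lt_of_le (hv g hg).1.1 with he | h
    · exfalso
      have h1 := (hu g hg).2.1
      have h2 := (hv g hg).2.1
      rw [← he] at h2
      exact absurd (h2.trans h1) (not_le.mpr hg.2.2.2.1)
    · exact h
  -- m < g.2 strictly inside (u g, v g), and > g.1
  have hmiddle : ∀ g : ℝ × ℝ, g ∈ G → ∀ t, u g < t → t < v g →
      g.1 < m t ∧ m t < g.2 := by
    intro g hg t hut htv
    have huIcc := (hu g hg).1
    have hvIcc := (hv g hg).1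
    have htIcc : t ∈ Set.Icc a b := ⟨huIcc.1.trans hut.le, htv.le.trans hvIcc.2⟩
    constructor
    · by_contra hle
      push_neg at hle
      exact absurd ((hu g hg).2.2 t htIcc hle) (not_le.mpr hut)
    · by_contra hle
      push_neg at hle
      exact absurd ((hv g hg).2.2 t ⟨hut.le, htIcc.2⟩ hle) (not_le.mpr htv)
  have hmv : ∀ g : ℝ × ℝ, g ∈ G → m (v g) = g.2 := by
    intro g hg
    refine le_antisymm ?_ (hv g hg).2.1
    have hQcl : IsClosed (Set.Icc a b ∩ m ⁻¹' Set.Iic g.2) :=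
      hmc.preimage_isClosed_of_isClosed isClosed_Icc isClosed_Iic
    have huIcc := (hu g hg).1
    have hvIcc := (hv g hg).1
    have hsub : Set.Ico (u g) (v g) ⊆ Set.Icc a b ∩ m ⁻¹' Set.Iic g.2 := by
      rintro t ⟨htu, htv⟩
      have htIcc : t ∈ Set.Icc a b := ⟨huIcc.1.trans htu, htv.le.trans hvIcc.2⟩
      refine ⟨htIcc, ?_⟩
      rcases eq_or_lt_of_le htu with rfl | hlt
      · exact (hu g hg).2.1.trans hg.2.2.2.1.le
      · exact (hmiddle g hg t hlt htv).2.le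
    have hcl : Set.Icc (u g) (v g) ⊆ Set.Icc a b ∩ m ⁻¹' Set.Iic g.2 := by
      rw [← closure_Ico (huv g hg).ne]
      exact closure_minimal hsub hQcl
    exact (hcl ⟨(huv g hg).le, le_rfl⟩).2
  have hnoΘ : ∀ g : ℝ × ℝ, g ∈ G → ∀ r ∈ Set.Ioo (u g) (v g), γ r ∉ Θ := by
    intro g hg r hr hrΘ
    have huIcc := (hu g hg).1
    have hvIcc := (hv g hg).1
    have hrIcc : r ∈ Set.Icc a b := ⟨huIcc.1.trans hr.1.le, hr.2.le.trans hvIcc.2⟩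
    have hrK : r ∈ K := ⟨hrIcc, subset_closure ⟨⟨r, hrIcc, rfl⟩, hrΘ⟩⟩
    have hmF : m r ∈ F := Or.inl ⟨r, hrK, rfl⟩
    have hmid := hmiddle g hg r hr.1 hr.2
    have : m r ∈ Set.Ioo g.1 g.2 ∩ F := ⟨⟨hmid.1, hmid.2⟩, hmF⟩
    rw [hg.2.2.2.2.2] at this
    exact this
  -- per-gap estimate
  have hgap : ∀ g : ℝ × ℝ, g ∈ G →
      ENNReal.ofReal (g.2 - g.1) ≤ (L : ℝ≥0∞) * volume (Set.Ioc (V (u g)) (V (v g))) := by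
    intro g hg
    have huIcc := (hu g hg).1
    have hvIcc := (hv g hg).1
    have hcore := core (u g) (v g) huIcc.1 hvIcc.2 (huv g hg) (hnoΘ g hg)
    have htri : m (v g) - m (u g) ≤ dist (f (γ (u g))) (f (γ (v g))) := by
      have := dist_triangle (f x) (f (γ (u g))) (f (γ (v g)))
      simp only [hm]
      linarith [this]
    have hreal : g.2 - g.1 ≤ (L : ℝ) * (V (v g) - V (u g)) := by
      have h1 := (hu g hg).2.1
      have h2 := hmv g hg
      linarith [htri, hcore]
    rw [Real.volume_Ioc]
    calc ENNReal.ofReal (g.2 - g.1) ≤ ENNReal.ofReal ((L : ℝ) * (V (v g) - V (u g))) :=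
          ENNReal.ofReal_le_ofReal hreal
      _ = (L : ℝ≥0∞) * ENNReal.ofReal (V (v g) - V (u g)) := by
          rw [ENNReal.ofReal_mul L.coe_nonneg, ENNReal.ofReal_coe_nnreal]
  -- gaps are ordered
  have horder : ∀ g ∈ G, ∀ h ∈ G, g ≠ h → g.2 ≤ h.1 ∨ h.2 ≤ g.1 := by
    intro g hg h hh hne
    by_contra hcon
    push_neg at hcon
    obtain ⟨h1, h2⟩ := hcon
    rcases lt_trichotomy g.1 h.1 with hlt | heq | hgt
    · have : h.1 ∈ Set.Ioo g.1 g.2 ∩ F := ⟨⟨hlt, h1⟩, hh.1⟩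
      rw [hg.2.2.2.2.2] at this; exact this
    · rcases lt_trichotomy g.2 h.2 with hlt2 | heq2 | hgt2
      · have : g.2 ∈ Set.Ioo h.1 h.2 ∩ F := ⟨⟨heq ▸ hg.2.2.2.1, hlt2⟩, hg.2.1⟩
        rw [hh.2.2.2.2.2] at this; exact this
      · exact hne (Prod.ext heq heq2)
      · have : h.2 ∈ Set.Ioo g.1 g.2 ∩ F := ⟨⟨heq ▸ hh.2.2.2.1, hgt2⟩, hh.2.1⟩
        rw [hg.2.2.2.2.2] at this; exact this
    · have : g.1 ∈ Set.Ioo h.1 h.2 ∩ F := ⟨⟨hgt, h2⟩, hg.1⟩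
      rw [hh.2.2.2.2.2] at this; exact this
  -- disjointness of V-intervals
  have hVle : ∀ g ∈ G, ∀ h ∈ G, g.2 ≤ h.1 → V (v g) ≤ V (u h) := by
    intro g hg h hh hle
    have hvIccg := (hv g hg).1
    have huIccg := (hu g hg).1
    have hvab : v g ∈ Set.Icc a b := ⟨huIccg.1.trans hvIccg.1, hvIccg.2⟩
    have : v g ≤ u h := (hu h hh).2.2 (v g) hvab (by rw [hmv g hg]; exact hle)
    exact hVmono hvab.1 this (hu h hh).1.2
  have hdisj : G.PairwiseDisjoint (fun g => Set.Ioc (V (u g)) (V (v g))) := by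
    intro g hg h hh hne
    rcases horder g hg h hh hne with hle | hle
    · apply Set.disjoint_left.mpr
      rintro z ⟨-, hz2⟩ ⟨hz3, -⟩
      exact absurd (hz2.trans (hVle g hg h hh hle)) (not_le.mpr hz3)
    · apply Set.disjoint_left.mpr
      rintro z ⟨hz1, -⟩ ⟨-, hz4⟩
      exact absurd (hz4.trans (hVle h hh g hg hle)) (not_le.mpr hz1)
  -- covering
  have hcover : Set.Ioo (0:ℝ) B ⊆ F ∪ ⋃ g ∈ G, Set.Ioo g.1 g.2 := by
    intro r hr
    by_cases hrF : r ∈ F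
    · exact Or.inl hrF
    right
    set p := sSup (F ∩ Set.Iic r) with hp
    set q := sInf (F ∩ Set.Ici r) with hq
    have hpbdd : BddAbove (F ∩ Set.Iic r) := ⟨r, fun z hz => hz.2⟩
    have hqbdd : BddBelow (F ∩ Set.Ici r) := ⟨r, fun z hz => hz.2⟩
    have hpmem : p ∈ F ∩ Set.Iic r :=
      (hFcl.inter isClosed_Iic).csSup_mem ⟨0, h0F, hr.1.le⟩ hpbdd
    have hqmem : q ∈ F ∩ Set.Ici r :=
      (hFcl.inter isClosed_Ici).csInf_mem ⟨B, hBF, hr.2.le⟩ hqbdd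
    have hpr : p < r := lt_of_le_of_ne hpmem.2 (fun e => hrF (e ▸ hpmem.1))
    have hrq : r < q := lt_of_le_of_ne hqmem.2 (fun e => hrF (by rw [e]; exact hqmem.1))
    have hp0 : 0 ≤ p := le_csSup hpbdd ⟨h0F, hr.1.le⟩
    have hqB : q ≤ B := csInf_le hqbdd ⟨hBF, hr.2.le⟩
    have hempty : Set.Ioo p q ∩ F = ∅ := by
      ext z
      simp only [Set.mem_inter_iff, Set.mem_Ioo, Set.mem_empty_iff_false, iff_false, not_and]
      rintro ⟨hz1, hz2⟩ hzF
      rcases le_or_gt z r with hzr | hzr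
      · exact absurd (le_csSup hpbdd ⟨hzF, hzr⟩) (not_le.mpr hz1)
      · exact absurd (csInf_le hqbdd ⟨hzF, hzr.le⟩) (not_le.mpr hz2)
    have hpqG : ((p, q) : ℝ × ℝ) ∈ G := ⟨hpmem.1, hqmem.1, hp0, hpr.trans hrq, hqB, hempty⟩
    exact Set.mem_biUnion hpqG ⟨hpr, hrq⟩
  -- final chain
  have hVab : ∀ g ∈ G, Set.Ioc (V (u g)) (V (v g)) ⊆ Set.Ioc (V a) (V b) := by
    intro g hg
    have huIcc := (hu g hg).1
    have hvIcc := (hv g hg).1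
    have hvab : v g ∈ Set.Icc a b := ⟨huIcc.1.trans hvIcc.1, hvIcc.2⟩
    exact Set.Ioc_subset_Ioc (hVmono le_rfl huIcc.1 huIcc.2) (hVmono hvab.1 hvab.2 le_rfl)
  have hVbfin : ENNReal.ofReal (V b - V a) ≤ pathLength γ a b := by
    apply ENNReal.ofReal_le_of_le_toReal
    have : (0:ℝ) ≤ V a := ENNReal.toReal_nonneg
    have : V b - V a ≤ V b := by linarith
    exact this
  calc ENNReal.ofReal B = volume (Set.Ioo (0:ℝ) B) := by rw [Real.volume_Ioo, sub_zero]
    _ ≤ volume (F ∪ ⋃ g ∈ G, Set.Ioo g.1 g.2) := measure_mono hcover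
    _ ≤ volume F + volume (⋃ g ∈ G, Set.Ioo g.1 g.2) := measure_union_le _ _
    _ = volume (⋃ g ∈ G, Set.Ioo g.1 g.2) := by
        rw [hFcnt.measure_zero volume, zero_add]
    _ ≤ ∑' (g : G), volume (Set.Ioo (g : ℝ × ℝ).1 (g : ℝ × ℝ).2) :=
        measure_biUnion_le volume hGcnt _
    _ ≤ ∑' (g : G), (L : ℝ≥0∞) * volume (Set.Ioc (V (u g)) (V (v g))) := by
        apply ENNReal.tsum_le_tsum
        intro g
        rw [Real.volume_Ioo]
        exact hgap g g.2
    _ = (L : ℝ≥0∞) * ∑' (g : G), volume (Set.Ioc (V (u (g : ℝ × ℝ))) (V (v (g : ℝ × ℝ)))) :=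
        ENNReal.tsum_mul_left
    _ = (L : ℝ≥0∞) * volume (⋃ g ∈ G, Set.Ioc (V (u g)) (V (v g))) := by
        rw [measure_biUnion hGcnt hdisj (fun _ _ => measurableSet_Ioc)]
    _ ≤ (L : ℝ≥0∞) * volume (Set.Ioc (V a) (V b)) := by
        apply mul_le_mul_right
        exact measure_mono (Set.iUnion₂_subset hVab)
    _ = (L : ℝ≥0∞) * ENNReal.ofReal (V b - V a) := by rw [Real.volume_Ioc]
    _ ≤ (L : ℝ≥0∞) * pathLength γ a b := mul_le_mul_right hVbfin _

/-- Corollary: on a length space, a continuous function which is intrinsically `L`-Lipschitz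
outside a permeable set is `L`-Lipschitz on the whole space. -/
theorem stmt7 {M Y : Type*} [MetricSpace M] [MetricSpace Y]
    (hlength : ∀ x y : M, intrinsicDist Set.univ x y = edist x y)
    (Θ : Set M) (hΘ : Permeable Θ) (f : M → Y) (hf : Continuous f) (L : NNReal)
    (hLip : ∀ x ∈ Θᶜ, ∀ y ∈ Θᶜ, intrinsicDist Θᶜ x y < ⊤ →
      edist (f x) (f y) ≤ L * intrinsicDist Θᶜ x y) :
    LipschitzWith L f := by
  intro x y
  have hperm : thetaDistIn Set.univ Θ x y = edist x y :=
    (hΘ x (Set.mem_univ x) y (Set.mem_univ y)).trans (hlength x y)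
  set S := { c | ∃ γ a b, IsPathIn Set.univ γ a b x y ∧ pathLength γ a b < ⊤ ∧
    (closure (γ '' Set.Icc a b ∩ Θ) ∩ Set.univ).Countable ∧ pathLength γ a b = c } with hS
  have hSinf : sInf S = edist x y := hperm
  have hkey : ∀ c ∈ S, edist (f x) (f y) ≤ L * c := by
    rintro c ⟨γ, a, b, hpath, hfin, hcnt, rfl⟩
    exact key_estimate Θ f hf L hLip γ a b x y hpath hfin (by simpa using hcnt)
  have hSne : S.Nonempty := by
    by_contra h
    rw [Set.not_nonempty_iff_eq_empty] at h
    rw [h, sInf_empty] at hSinf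
    exact (edist_ne_top x y) hSinf.symm
  rcases eq_or_ne L 0 with rfl | hL0
  · obtain ⟨c, hc⟩ := hSne
    have := hkey c hc
    simp only [ENNReal.coe_zero, zero_mul] at this ⊢
    exact this
  · apply ENNReal.le_of_forall_pos_le_add
    intro ε hε _
    have hLne : (L : ℝ≥0∞) ≠ 0 := by simpa using hL0
    have hLt : (L : ℝ≥0∞) ≠ ⊤ := ENNReal.coe_ne_top
    have hεL : (0 : ℝ≥0∞) < (ε : ℝ≥0∞) / L := ENNReal.div_pos (by exact_mod_cast hε.ne') hLt
    have hlt : sInf S < sInf S + (ε : ℝ≥0∞) / L :=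
      ENNReal.lt_add_right (by rw [hSinf]; exact edist_ne_top x y) hεL.ne'
    obtain ⟨c, hcS, hc⟩ := sInf_lt_iff.mp hlt
    calc edist (f x) (f y) ≤ L * c := hkey c hcS
      _ ≤ (L : ℝ≥0∞) * (sInf S + (ε : ℝ≥0∞) / L) := mul_le_mul_right hc.le _
      _ = (L : ℝ≥0∞) * sInf S + (L : ℝ≥0∞) * ((ε : ℝ≥0∞) / L) := mul_add _ _ _
      _ = (L : ℝ≥0∞) * edist x y + (ε : ℝ≥0∞) := by
          rw [hSinf, ENNReal.mul_div_cancel hLne hLt]
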